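/- In the setting of the stochastic mirror descent iteration, if ξ_{n+1} = ξ_n - t·g where g ∈ X*, ξ_n ∈ ∂R(x_n), x_n = ∇R*(ξ_n), x_{n+1} = ∇R*(ξ_{n+1}), and x̂ ∈ dom(R), then the Bregman distances Δ_n := D_R^{ξ_n}(x̂, x_n) satisfy Δ_{n+1} - Δ_n ≤ (1/(4σ))·t²·‖g‖² - t·⟨g, x̂ - x_n⟩·(-1), i.e. Δ_{n+1} - Δ_n ≤ ‖ξ_{n+1} - ξ_n‖²/(4σ) + ⟨ξ_{n+1} - ξ_n, x_n - x̂⟩. -/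

import Mathlib

theorem stmt_6 {X : Type*} [NormedAddCommGroup X] [NormedSpace ℝ X] [CompleteSpace X]
    (R : X → EReal) (σ : ℝ) (hσ : 0 < σ)
    (hproper : ∃ x, R x ≠ ⊤) (hnobot : ∀ x, R x ≠ ⊥)
    (hlsc : LowerSemicontinuous R)
    (hsc : ∀ u v : X, R u ≠ ⊤ → R v ≠ ⊤ → ∀ t : ℝ, 0 ≤ t → t ≤ 1 →
      R (t • u + (1 - t) • v) + ((σ * t * (1 - t) * ‖u - v‖ ^ 2 : ℝ) : EReal)
        ≤ (t : EReal) * R u + ((1 - t : ℝ) : EReal) * R v)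
    (ξn ξn1 : X →L[ℝ] ℝ) (xn xn1 : X)
    -- `xn = ∇R*(ξn)`, i.e. `ξn ∈ ∂R(xn)`
    (hxn : ∀ z : X, R xn + ((ξn (z - xn) : ℝ) : EReal) ≤ R z)
    -- `xn1 = ∇R*(ξn1)`, i.e. `ξn1 ∈ ∂R(xn1)`
    (hxn1 : ∀ z : X, R xn1 + ((ξn1 (z - xn1) : ℝ) : EReal) ≤ R z)
    (xhat : X) (hxhat : R xhat ≠ ⊤) :
    R xhat - R xn1 - ((ξn1 (xhat - xn1) : ℝ) : EReal)
      ≤ (R xhat - R xn - ((ξn (xhat - xn) : ℝ) : EReal))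
        + ((‖ξn1 - ξn‖ ^ 2 / (4 * σ) + (ξn1 - ξn) (xn - xhat) : ℝ) : EReal) := by
  -- finiteness of R xn
  have hRxn_top : R xn ≠ ⊤ := by
    intro h
    have := hxn xhat
    rw [h] at this
    rw [EReal.top_add_coe] at this
    exact hxhat (top_le_iff.mp this)
  have hRxn1_top : R xn1 ≠ ⊤ := by
    intro h
    have := hxn1 xhat
    rw [h] at this
    rw [EReal.top_add_coe] at this
    exact hxhat (top_le_iff.mp this)
  obtain ⟨rh, hrh⟩ : ∃ r : ℝ, R xhat = (r : EReal) := ⟨(R xhat).toReal, (EReal.coe_toReal hxhat (hnobot xhat)).symm⟩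
  obtain ⟨rn, hrn⟩ : ∃ r : ℝ, R xn = (r : EReal) := ⟨(R xn).toReal, (EReal.coe_toReal hRxn_top (hnobot xn)).symm⟩
  obtain ⟨rn1, hrn1⟩ : ∃ r : ℝ, R xn1 = (r : EReal) := ⟨(R xn1).toReal, (EReal.coe_toReal hRxn1_top (hnobot xn1)).symm⟩
  set c : ℝ := ‖xn1 - xn‖ ^ 2 with hc
  have hc0 : 0 ≤ c := by positivity
  -- the key strongly convex subgradient inequality at (xn, ξn) evaluated at xn1
  have key : ∀ t : ℝ, 0 < t → t ≤ 1 →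
      ξn (xn1 - xn) + σ * (1 - t) * c ≤ rn1 - rn := by
    intro t ht ht1
    have h1 := hxn (t • xn1 + (1 - t) • xn)
    have h2 := hsc xn1 xn hRxn1_top hRxn_top t ht.le ht1
    have hm : t • xn1 + (1 - t) • xn - xn = t • (xn1 - xn) := by
      rw [smul_sub, sub_smul, one_smul]; abel
    rw [hm, map_smul] at h1
    -- combine in EReal
    have h3 : R xn + ((t * ξn (xn1 - xn) : ℝ) : EReal) + ((σ * t * (1 - t) * c : ℝ) : EReal)
        ≤ (t : EReal) * R xn1 + ((1 - t : ℝ) : EReal) * R xn := by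
      calc R xn + ((t * ξn (xn1 - xn) : ℝ) : EReal) + ((σ * t * (1 - t) * c : ℝ) : EReal)
          ≤ R (t • xn1 + (1 - t) • xn) + ((σ * t * (1 - t) * c : ℝ) : EReal) := by
            exact add_le_add_left (by simpa using h1) _
        _ ≤ (t : EReal) * R xn1 + ((1 - t : ℝ) : EReal) * R xn := h2
    rw [hrn, hrn1] at h3
    have h4 : rn + t * ξn (xn1 - xn) + σ * t * (1 - t) * c ≤ t * rn1 + (1 - t) * rn := by
      have := h3
      rw [← EReal.coe_mul, ← EReal.coe_mul, ← EReal.coe_add, ← EReal.coe_add, ← EReal.coe_add] at this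
      exact_mod_cast this
    nlinarith [mul_pos ht hσ]
  -- limit t → 0
  have F1 : ξn (xn1 - xn) + σ * c ≤ rn1 - rn := by
    apply le_of_forall_pos_le_add
    intro ε hε
    set t : ℝ := min 1 (ε / (σ * c + 1)) with htdef
    have hden : 0 < σ * c + 1 := by positivity
    have ht : 0 < t := lt_min one_pos (div_pos hε hden)
    have ht1 : t ≤ 1 := min_le_left _ _
    have h := key t ht ht1
    have htle : t ≤ ε / (σ * c + 1) := min_le_right _ _
    have : σ * t * c ≤ ε := by
      have h1 : σ * t * c ≤ σ * (ε / (σ * c + 1)) * c := by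
        nlinarith [mul_nonneg (sub_nonneg.mpr htle) (mul_nonneg hσ.le hc0)]
      have h2 : σ * (ε / (σ * c + 1)) * c ≤ ε := by
        rw [show σ * (ε / (σ * c + 1)) * c = ε * (σ * c) / (σ * c + 1) by ring,
          div_le_iff₀ hden]
        nlinarith
      linarith
    linarith
  -- operator norm bound
  have F2 : (ξn1 - ξn) (xn1 - xn) ≤ ‖ξn1 - ξn‖ * ‖xn1 - xn‖ :=
    le_trans (le_abs_self _) ((ξn1 - ξn).le_opNorm (xn1 - xn))
  have F3 : ‖ξn1 - ξn‖ * ‖xn1 - xn‖ - σ * ‖xn1 - xn‖ ^ 2 ≤ ‖ξn1 - ξn‖ ^ 2 / (4 * σ) := by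
    rw [le_div_iff₀ (by positivity : (0:ℝ) < 4 * σ)]
    nlinarith [sq_nonneg (‖ξn1 - ξn‖ - 2 * σ * ‖xn1 - xn‖), hc]
  -- assemble
  rw [hrh, hrn, hrn1]
  rw [← EReal.coe_sub, ← EReal.coe_sub, ← EReal.coe_sub, ← EReal.coe_sub, ← EReal.coe_add]
  rw [EReal.coe_le_coe_iff]
  simp only [ContinuousLinearMap.sub_apply, map_sub] at *
  nlinarith [F1, F2, F3, show c = ‖xn1 - xn‖ ^ 2 from rfl]
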